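/- Let ν(w) denote the number of pipe dreams of a permutation w, and for u ∈ S_m let p_u(w) denote the number of occurrences of the pattern u in w. Suppose c assigns an integer c(u) to every permutation u of {1,…,m} for every m ≥ 1, and satisfies, for every n ≥ 1 and every permutation w of {1,…,n}: c(w) = ν(w) − 1 − Σ_{m=1}^{n−1} Σ_{u ∈ S_m} c(u)·p_u(w). Then for every n ≥ 1 and every w ∈ S_n with w(n) = n, c(w) = 0. -/

import Mathlib

/-- The simple transposition corresponding to the cell `(i, j)`, namely
`s_{i+j-1}`, swapping `i+j-1` and `i+j` (as a permutation of the positive integers). -/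
def cellTrans (p : ℕ+ × ℕ+) : Equiv.Perm ℕ+ :=
  Equiv.swap (p.1 + p.2 - 1) (p.1 + p.2)

/-- Key used to order cells: rows increasing, and within a row, columns decreasing. -/
def cellKey (p : ℕ+ × ℕ+) : Lex (ℕ+ × ℕ+ᵒᵈ) :=
  toLex (p.1, OrderDual.toDual p.2)

/-- The product of the simple transpositions `s_{i+j-1}` over the cells `(i,j)` of `D`,
taken with `i` increasing and, for fixed `i`, `j` decreasing. -/
def pdWord (D : Finset (ℕ+ × ℕ+)) : Equiv.Perm ℕ+ :=
  (((D.image cellKey).sort (· ≤ ·)).map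
    (fun q => cellTrans ((ofLex q).1, OrderDual.ofDual (ofLex q).2))).prod

/-- The number of inversions of a permutation of the positive integers. -/
noncomputable def invNum (w : Equiv.Perm ℕ+) : ℕ :=
  Set.ncard {p : ℕ+ × ℕ+ | p.1 < p.2 ∧ w p.2 < w p.1}

/-- `D` is a pipe dream (RC-graph) of `w`. -/
def IsPipeDream (w : Equiv.Perm ℕ+) (D : Finset (ℕ+ × ℕ+)) : Prop :=
  D.card = invNum w ∧ pdWord D = w

/-- The number of pipe dreams of `w`. -/
noncomputable def nu (w : Equiv.Perm ℕ+) : ℕ :=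
  Set.ncard {D : Finset (ℕ+ × ℕ+) | IsPipeDream w D}

/-- The number of occurrences of the pattern 132 in `w`. -/
noncomputable def p132 (w : Equiv.Perm ℕ+) : ℕ :=
  Set.ncard {t : ℕ+ × ℕ+ × ℕ+ |
    t.1 < t.2.1 ∧ t.2.1 < t.2.2 ∧ w t.1 < w t.2.2 ∧ w t.2.2 < w t.2.1}

/-- The number of occurrences of the pattern 1432 in `w`. -/
noncomputable def p1432 (w : Equiv.Perm ℕ+) : ℕ :=
  Set.ncard {t : ℕ+ × ℕ+ × ℕ+ × ℕ+ |
    t.1 < t.2.1 ∧ t.2.1 < t.2.2.1 ∧ t.2.2.1 < t.2.2.2 ∧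
    w t.1 < w t.2.2.2 ∧ w t.2.2.2 < w t.2.2.1 ∧ w t.2.2.1 < w t.2.1}

/-- `w` avoids the pattern 1432. -/
def Avoids1432 (w : Equiv.Perm ℕ+) : Prop :=
  ¬ ∃ a b c d : ℕ+, a < b ∧ b < c ∧ c < d ∧ w a < w d ∧ w d < w c ∧ w c < w b

/-- The Rothe diagram of `w`. -/
def RD (w : Equiv.Perm ℕ+) : Set (ℕ+ × ℕ+) :=
  {p | p.2 < w p.1 ∧ p.1 < w⁻¹ p.2}

/-- The Lehmer code of `w`: `code(w)_i = #{j > i : w(j) < w(i)}`. -/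
noncomputable def lehmer (w : Equiv.Perm ℕ+) (i : ℕ+) : ℕ :=
  Set.ncard {j : ℕ+ | i < j ∧ w j < w i}

/-- The bottom pipe dream `B_w = {(i,j) : 1 ≤ j ≤ code(w)_i}` (as a set of cells). -/
def bottomSet (w : Equiv.Perm ℕ+) : Set (ℕ+ × ℕ+) :=
  {p | (p.2 : ℕ) ≤ lehmer w p.1}

/-- The top pipe dream `T_w = {(i,j) : 1 ≤ i ≤ code(w⁻¹)_j}` (as a set of cells). -/
def topSet (w : Equiv.Perm ℕ+) : Set (ℕ+ × ℕ+) :=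
  {p | (p.1 : ℕ) ≤ lehmer w⁻¹ p.2}

/-- `α(S)_m`: the number of cells of `S` on the diagonal `{(i,j) : i + j - 1 = m}`. -/
noncomputable def diagCount (S : Set (ℕ+ × ℕ+)) : ℕ+ → ℕ :=
  fun m => Set.ncard {p | p ∈ S ∧ p.1 + p.2 = m + 1}

/-- Ladder move of order `k` taking `D` to `D'`: writing `i = i₀ + k + 1` (so `i₀ = i - k - 1`
and automatically `i ≥ k + 2`), it requires `(i,j) ∈ D`, `(i,j+1) ∉ D`, `(i₀,j) ∉ D`,
`(i₀,j+1) ∉ D`, and `(i',j), (i',j+1) ∈ D` for all `i - k ≤ i' < i`; it removes `(i,j)` and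
adds `(i₀, j+1)`. -/
def LadderMove (k : ℕ) (D D' : Finset (ℕ+ × ℕ+)) : Prop :=
  ∃ i₀ j : ℕ+,
    (i₀ + k.succPNat, j) ∈ D ∧
    (i₀ + k.succPNat, j + 1) ∉ D ∧
    (i₀, j) ∉ D ∧
    (i₀, j + 1) ∉ D ∧
    (∀ i' : ℕ+, i₀ < i' → i' < i₀ + k.succPNat → (i', j) ∈ D ∧ (i', j + 1) ∈ D) ∧
    D' = insert (i₀, j + 1) (D.erase (i₀ + k.succPNat, j))

/-- The identification of `{1, …, n}` (as `Fin n`, with `i : Fin n` standing for the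
positive integer `i + 1`) with the positive integers `≤ n`. -/
def finPNatEquiv (n : ℕ) : Fin n ≃ {x : ℕ+ // (x : ℕ) ≤ n} where
  toFun i := ⟨⟨(i : ℕ) + 1, Nat.succ_pos _⟩, by
    show (i : ℕ) + 1 ≤ n
    omega⟩
  invFun x := ⟨(x.1 : ℕ) - 1, by
    rcases x with ⟨⟨v, hv⟩, h⟩
    show v - 1 < n
    simp only [PNat.mk_coe] at h
    omega⟩
  left_inv i := by ext; simp
  right_inv x := by
    rcases x with ⟨⟨v, hv⟩, h⟩
    refine Subtype.ext (PNat.coe_injective ?_)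
    show (v - 1) + 1 = v
    omega

/-- Extend a permutation of `{1, …, n}` to a permutation of the positive integers
fixing every integer greater than `n`. -/
def extendPerm {n : ℕ} (w : Equiv.Perm (Fin n)) : Equiv.Perm ℕ+ :=
  w.extendDomain (finPNatEquiv n)

/-- The number of occurrences of the pattern `u ∈ S_m` in `w ∈ S_n`. -/
noncomputable def pOcc {m n : ℕ} (u : Equiv.Perm (Fin m)) (w : Equiv.Perm (Fin n)) : ℕ :=
  Set.ncard {a : Fin m → Fin n | StrictMono a ∧
    ∀ i j : Fin m, i < j → (w (a i) < w (a j) ↔ u i < u j)}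

lemma invNum_one : invNum 1 = 0 := by
  have h : {p : ℕ+ × ℕ+ | p.1 < p.2 ∧ (1 : Equiv.Perm ℕ+) p.2 < (1 : Equiv.Perm ℕ+) p.1} = ∅ := by
    ext p
    simp only [Equiv.Perm.one_apply, Set.mem_setOf_eq, Set.mem_empty_iff_false, iff_false]
    rintro ⟨h1, h2⟩
    exact absurd h2 (not_lt.mpr h1.le)
  rw [invNum, h, Set.ncard_empty]

lemma pdWord_empty : pdWord ∅ = 1 := by
  simp [pdWord]

lemma nu_one : nu 1 = 1 := by
  have h : {D : Finset (ℕ+ × ℕ+) | IsPipeDream 1 D} = {∅} := by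
    ext D
    simp only [Set.mem_setOf_eq, IsPipeDream, invNum_one, Finset.card_eq_zero,
      Set.mem_singleton_iff]
    constructor
    · rintro ⟨rfl, -⟩; rfl
    · rintro rfl; exact ⟨rfl, pdWord_empty⟩
  rw [nu, h, Set.ncard_singleton]

/-- Restriction of a permutation of `Fin (n+1)` fixing `last` to `Fin n`. -/
def restrictLast {n : ℕ} (w : Equiv.Perm (Fin (n + 1))) (hw : w (Fin.last n) = Fin.last n) :
    Equiv.Perm (Fin n) where
  toFun i := (w i.castSucc).castLT (by
    have hne : w i.castSucc ≠ Fin.last n := fun h => by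
      have h2 : i.castSucc = Fin.last n := w.injective (h.trans hw.symm)
      exact (Fin.castSucc_lt_last i).ne h2
    have := (w i.castSucc).isLt
    have := Fin.val_ne_iff.mpr hne
    simp only [Fin.val_last] at this
    omega)
  invFun i := (w⁻¹ i.castSucc).castLT (by
    have hw' : w⁻¹ (Fin.last n) = Fin.last n := by
      conv_lhs => rw [← hw]
      rw [Equiv.Perm.coe_inv, Equiv.symm_apply_apply]
    have hne : w⁻¹ i.castSucc ≠ Fin.last n := fun h => by
      have h2 : i.castSucc = Fin.last n := w⁻¹.injective (h.trans hw'.symm)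
      exact (Fin.castSucc_lt_last i).ne h2
    have := (w⁻¹ i.castSucc).isLt
    have := Fin.val_ne_iff.mpr hne
    simp only [Fin.val_last] at this
    omega)
  left_inv i := by
    apply Fin.ext
    simp [Fin.castSucc_castLT, hw]
  right_inv i := by
    apply Fin.ext
    simp [Fin.castSucc_castLT, hw]

lemma restrictLast_castSucc {n : ℕ} (w : Equiv.Perm (Fin (n + 1)))
    (hw : w (Fin.last n) = Fin.last n) (i : Fin n) :
    ((restrictLast w hw) i).castSucc = w i.castSucc := by
  apply Fin.ext
  simp [restrictLast]

lemma extendPerm_apply_of_le {n : ℕ} (w : Equiv.Perm (Fin n)) (x : ℕ+) (h : (x : ℕ) ≤ n) :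
    ((extendPerm w x : ℕ+) : ℕ) = (w ⟨(x : ℕ) - 1, Nat.lt_of_lt_of_le (Nat.sub_lt x.2 one_pos) h⟩ : ℕ) + 1 := by
  have key := Equiv.Perm.extendDomain_apply_subtype w (finPNatEquiv n) (b := x) h
  rw [extendPerm, key]
  rfl

lemma extendPerm_apply_of_gt {n : ℕ} (w : Equiv.Perm (Fin n)) (x : ℕ+) (h : ¬ (x : ℕ) ≤ n) :
    extendPerm w x = x := by
  have key := Equiv.Perm.extendDomain_apply_not_subtype w (finPNatEquiv n) (b := x) h
  rw [extendPerm, key]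

lemma extendPerm_restrictLast {n : ℕ} (w : Equiv.Perm (Fin (n + 1)))
    (hw : w (Fin.last n) = Fin.last n) :
    extendPerm (restrictLast w hw) = extendPerm w := by
  apply Equiv.ext
  intro x
  apply PNat.coe_injective
  by_cases h1 : (x : ℕ) ≤ n
  · have h2 : (x : ℕ) ≤ n + 1 := by omega
    rw [extendPerm_apply_of_le _ x h1, extendPerm_apply_of_le _ x h2]
    have key := restrictLast_castSucc w hw ⟨(x : ℕ) - 1, Nat.lt_of_lt_of_le (Nat.sub_lt x.2 one_pos) h1⟩
    have key2 := congrArg Fin.val key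
    simp only [Fin.coe_castSucc] at key2
    rw [key2]
    congr 1
  · by_cases h2 : (x : ℕ) ≤ n + 1
    · rw [extendPerm_apply_of_gt _ x h1, extendPerm_apply_of_le _ x h2]
      have hx : (x : ℕ) = n + 1 := by omega
      have hl : (⟨(x : ℕ) - 1, Nat.lt_of_lt_of_le (Nat.sub_lt x.2 one_pos) h2⟩ : Fin (n + 1)) = Fin.last n := by
        apply Fin.ext; simp [hx]
      rw [hl, hw]
      simp [hx]
    · rw [extendPerm_apply_of_gt _ x h1, extendPerm_apply_of_gt _ x h2]

lemma fin_strictMono_id {n : ℕ} {a : Fin n → Fin n} (h : StrictMono a) : ∀ i, a i = i := by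
  have i1 : WellFoundedLT (Fin n) := inferInstance
  have i2 : WellFoundedGT (Fin n) := inferInstance
  exact fun i => le_antisymm h.apply_le h.le_apply

lemma pattern_unique {n : ℕ} {u w : Equiv.Perm (Fin n)}
    (h : ∀ i j, i < j → (w i < w j ↔ u i < u j)) : u = w := by
  have key : StrictMono (fun x => u (w.symm x)) := by
    intro x y hxy
    rcases lt_trichotomy (w.symm x) (w.symm y) with hij | hij | hij
    · exact (h _ _ hij).mp (by simpa using hxy)
    · exact absurd (show x = y by simpa using congrArg w hij) hxy.ne
    · have h2 := h _ _ hij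
      simp only [Equiv.apply_symm_apply] at h2
      have hne : u (w.symm x) ≠ u (w.symm y) := fun he => hxy.ne (by
        have := w.symm.injective (u.injective he); simpa using congrArg w this)
      rcases lt_or_ge (u (w.symm x)) (u (w.symm y)) with h3 | h3
      · exact h3
      · exact absurd (h2.mpr (lt_of_le_of_ne h3 (Ne.symm hne))) (not_lt.mpr hxy.le)
  apply Equiv.ext
  intro i
  have := fin_strictMono_id key (w i)
  simpa using this

lemma pOcc_self {n : ℕ} (w : Equiv.Perm (Fin n)) : pOcc w w = 1 := by
  have h : {a : Fin n → Fin n | StrictMono a ∧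
      ∀ i j : Fin n, i < j → (w (a i) < w (a j) ↔ w i < w j)} = {fun i => i} := by
    ext a
    constructor
    · rintro ⟨hm, -⟩
      exact funext (fin_strictMono_id hm)
    · rintro rfl
      exact ⟨strictMono_id, fun i j _ => Iff.rfl⟩
  rw [pOcc, h, Set.ncard_singleton]

lemma pOcc_ne {n : ℕ} {u w : Equiv.Perm (Fin n)} (hne : u ≠ w) : pOcc u w = 0 := by
  have h : {a : Fin n → Fin n | StrictMono a ∧
      ∀ i j : Fin n, i < j → (w (a i) < w (a j) ↔ u i < u j)} = ∅ := by
    ext a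
    simp only [Set.mem_setOf_eq, Set.mem_empty_iff_false, iff_false]
    rintro ⟨hm, hcond⟩
    have ha := fin_strictMono_id hm
    refine hne (pattern_unique fun i j hij => ?_)
    have := hcond i j hij
    rwa [ha i, ha j] at this
  rw [pOcc, h, Set.ncard_empty]

lemma pOcc_restrictLast {n k : ℕ} (w : Equiv.Perm (Fin (n + 1)))
    (hw : w (Fin.last n) = Fin.last n)
    (u : Equiv.Perm (Fin (k + 1))) (hu : u (Fin.last k) ≠ Fin.last k) :
    pOcc u w = pOcc u (restrictLast w hw) := by
  set w' := restrictLast w hw with hw'def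
  have hr : ∀ i : Fin n, (w' i).castSucc = w i.castSucc := restrictLast_castSucc w hw
  have hF : Function.Injective (fun a' : Fin (k + 1) → Fin n => Fin.castSucc ∘ a') := by
    intro a b hab
    funext i
    exact Fin.castSucc_injective n (congrFun hab i)
  have hset : {a : Fin (k + 1) → Fin (n + 1) | StrictMono a ∧
        ∀ i j : Fin (k + 1), i < j → (w (a i) < w (a j) ↔ u i < u j)} =
      (fun a' : Fin (k + 1) → Fin n => Fin.castSucc ∘ a') ''
      {a : Fin (k + 1) → Fin n | StrictMono a ∧
        ∀ i j : Fin (k + 1), i < j → (w' (a i) < w' (a j) ↔ u i < u j)} := by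
    ext a
    constructor
    · rintro ⟨hm, hcond⟩
      -- a never hits last
      have hne : ∀ i, a i ≠ Fin.last n := by
        intro i hi
        have hil : i = Fin.last k := by
          by_contra hil
          have h1 : i < Fin.last k := lt_of_le_of_ne (Fin.le_last i) hil
          have h2 : a i < a (Fin.last k) := hm h1
          exact absurd (hi ▸ h2) (not_lt.mpr (Fin.le_last _))
        subst hil
        -- so a last = last; derive u last = last
        have hkey : ∀ j : Fin (k + 1), j < Fin.last k → u j < u (Fin.last k) := by
          intro j hj
          have h3 : w (a j) ≠ Fin.last n := by
            intro h4
            have h5 : a j = Fin.last n := w.injective (h4.trans hw.symm)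
            have h6 : a j = a (Fin.last k) := h5.trans hi.symm
            exact (ne_of_lt hj) (hm.injective h6)
          have h7 : w (a j) < Fin.last n := lt_of_le_of_ne (Fin.le_last _) h3
          have h8 : w (a (Fin.last k)) = Fin.last n := by rw [hi, hw]
          exact (hcond j (Fin.last k) hj).mp (h8 ▸ h7)
        apply hu
        by_contra hul
        have h9 : u.symm (Fin.last k) ≠ Fin.last k := by
          intro h10
          have h10' := congrArg u h10
          rw [Equiv.apply_symm_apply] at h10'
          exact hul h10'.symm
        have h11 : u.symm (Fin.last k) < Fin.last k := lt_of_le_of_ne (Fin.le_last _) h9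
        have h12 := hkey _ h11
        rw [Equiv.apply_symm_apply] at h12
        exact absurd h12 (not_lt.mpr (Fin.le_last _))
      have hlt : ∀ i, (a i : ℕ) < n := by
        intro i
        have := (a i).isLt
        have h2 : (a i : ℕ) ≠ n := fun h => hne i (Fin.ext (by simpa using h))
        omega
      refine ⟨fun i => (a i).castLT (hlt i), ⟨?_, ?_⟩, ?_⟩
      · intro x y hxy
        have h0 := hm hxy
        rw [Fin.lt_def] at h0 ⊢
        exact h0
      · intro i j hij
        have e1 : (w' ((a i).castLT (hlt i))).castSucc = w (a i) := by
          rw [hr, Fin.castSucc_castLT]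
        have e2 : (w' ((a j).castLT (hlt j))).castSucc = w (a j) := by
          rw [hr, Fin.castSucc_castLT]
        rw [← hcond i j hij, ← e1, ← e2, Fin.castSucc_lt_castSucc_iff]
      · funext i
        simp [Fin.castSucc_castLT]
    · rintro ⟨a', ⟨hm, hcond⟩, rfl⟩
      constructor
      · intro x y hxy
        simp only [Function.comp_apply]
        exact Fin.castSucc_lt_castSucc_iff.mpr (hm hxy)
      · intro i j hij
        have e1 : w ((a' i).castSucc) = (w' (a' i)).castSucc := (hr _).symm
        have e2 : w ((a' j).castSucc) = (w' (a' j)).castSucc := (hr _).symm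
        simp only [Function.comp_apply, e1, e2, Fin.castSucc_lt_castSucc_iff]
        exact hcond i j hij
  rw [pOcc, pOcc, hset, Set.ncard_image_of_injective _ hF]

theorem c_eq_zero_of_fixes_last (c : (m : ℕ) → Equiv.Perm (Fin m) → ℤ)
    (hc : ∀ (n : ℕ), 1 ≤ n → ∀ w : Equiv.Perm (Fin n),
      c n w = (nu (extendPerm w) : ℤ) - 1 -
        ∑ m ∈ Finset.Icc 1 (n - 1), ∑ u : Equiv.Perm (Fin m), c m u * (pOcc u w : ℤ)) :
    ∀ (m : ℕ) (w : Equiv.Perm (Fin (m + 1))), w (Fin.last m) = Fin.last m →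
      c (m + 1) w = 0 := by
  intro m
  induction m using Nat.strong_induction_on with
  | _ m IH =>
  intro w hw
  rcases Nat.eq_zero_or_pos m with rfl | hm
  · have h1 := hc 1 le_rfl w
    have hw1 : w = 1 := by
      apply Equiv.ext
      intro i
      simp only [Equiv.Perm.one_apply]
      apply Fin.ext
      have h1 := (w i).isLt
      have h2 := i.isLt
      omega
    rw [hw1] at h1 ⊢
    rw [show extendPerm (1 : Equiv.Perm (Fin 1)) = 1 from Equiv.Perm.extendDomain_one _,
      nu_one, show (1 : ℕ) - 1 = 0 from rfl, show Finset.Icc 1 0 = ∅ from rfl,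
      Finset.sum_empty] at h1
    rw [h1]; ring
  · obtain ⟨n, rfl⟩ : ∃ n, m = n + 1 := ⟨m - 1, (Nat.succ_pred_eq_of_pos hm).symm⟩
    set w' := restrictLast w hw with hw'def
    have hIH : ∀ k, k ≤ n → ∀ v : Equiv.Perm (Fin (k + 1)),
        v (Fin.last k) = Fin.last k → c (k + 1) v = 0 :=
      fun k hk => IH k (by omega)
    have hmain := hc (n + 2) (by omega) w
    have hmain' := hc (n + 1) (by omega) w'
    simp only [Nat.add_sub_cancel] at hmain'
    simp only [show n + 2 - 1 = n + 1 from rfl] at hmain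
    have htop : ∑ u : Equiv.Perm (Fin (n + 1)), c (n + 1) u * (pOcc u w : ℤ) = c (n + 1) w' := by
      rw [Finset.sum_eq_single w']
      · by_cases hl : w' (Fin.last n) = Fin.last n
        · rw [hIH n le_rfl w' hl]; ring
        · rw [pOcc_restrictLast w hw w' hl, pOcc_self]; ring
      · intro u _ hne
        by_cases hl : u (Fin.last n) = Fin.last n
        · rw [hIH n le_rfl u hl]; ring
        · rw [pOcc_restrictLast w hw u hl, pOcc_ne hne]; ring
      · intro h; exact absurd (Finset.mem_univ _) h
    have hmid : ∀ k ∈ Finset.Icc 1 n,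
        ∑ u : Equiv.Perm (Fin k), c k u * (pOcc u w : ℤ) =
        ∑ u : Equiv.Perm (Fin k), c k u * (pOcc u w' : ℤ) := by
      intro k hk
      rw [Finset.mem_Icc] at hk
      obtain ⟨k', rfl⟩ : ∃ k', k = k' + 1 := ⟨k - 1, by omega⟩
      apply Finset.sum_congr rfl
      intro u _
      by_cases hl : u (Fin.last k') = Fin.last k'
      · rw [hIH k' (by omega) u hl]; ring
      · rw [pOcc_restrictLast w hw u hl]
    rw [Finset.sum_Icc_succ_top (show 1 ≤ n + 1 by omega), Finset.sum_congr rfl hmid,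
      htop, ← extendPerm_restrictLast w hw] at hmain
    rw [hmain, hmain']
    ring
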